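/- Zero-mean property of the generalized Charlier kernels: for n ≥ 1, Σ_{k=0}^∞ C_n^{λ,β}(k) π_{λ,β}({k}) = 0, and for n = 0, the sum is 1. -/

import Mathlib

set_option maxHeartbeats 1000000

open Real Filter FormalMultilinearSeries Metric Topology

lemma gamma_summable (β : ℝ) (hβ : 0 < β) (r : NNReal) :
    Summable (fun n : ℕ => (Real.Gamma (β * n + 1))⁻¹ * (r : ℝ) ^ n) := by
  obtain ⟨N, hN⟩ := exists_nat_ge ((2 * ((r : ℝ) + 1)) ^ (1 / β : ℝ))
  have h2r : (0:ℝ) < 2 * ((r:ℝ) + 1) := by positivity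
  have hN1 : (1:ℝ) ≤ (N:ℝ) + 1 := by linarith [Nat.cast_nonneg (α := ℝ) N]
  have hNβ : (2 * ((r:ℝ) + 1)) ≤ ((N:ℝ) + 1) ^ (β : ℝ) := by
    calc (2 * ((r:ℝ) + 1)) = ((2 * ((r:ℝ)+1)) ^ (1/β : ℝ)) ^ (β:ℝ) := by
          rw [← Real.rpow_mul h2r.le, one_div, inv_mul_cancel₀ hβ.ne', Real.rpow_one]
      _ ≤ ((N:ℝ) + 1) ^ (β:ℝ) := by
          apply Real.rpow_le_rpow (Real.rpow_nonneg h2r.le _) (hN.trans (by linarith)) hβ.le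
  -- key pointwise bound for large n
  have key : ∀ n : ℕ, (N + 2 : ℝ) / β ≤ n →
      (Real.Gamma (β * n + 1))⁻¹ * (r : ℝ) ^ n ≤ ((N:ℝ)+1) ^ (N + 1 : ℕ) * (1/2 : ℝ) ^ n := by
    intro n hn
    have hβn : (N:ℝ) + 2 ≤ β * n := by
      rw [div_le_iff₀ hβ] at hn; linarith [hn]
    set j : ℕ := Nat.floor (β * n) with hj
    have hjge : (N + 2 : ℕ) ≤ j := Nat.le_floor (by push_cast; linarith)
    have hjle : (j : ℝ) ≤ β * n := Nat.floor_le (by positivity)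
    have hjgt : β * n - 1 < (j:ℝ) := by
      have := Nat.lt_floor_add_one (β * n); linarith
    -- Γ(βn+1) ≥ Γ(j+1) = j!
    have hmono : (j.factorial : ℝ) ≤ Real.Gamma (β * n + 1) := by
      rw [← Real.Gamma_nat_eq_factorial]
      rcases eq_or_lt_of_le (by linarith : (j:ℝ) + 1 ≤ β * n + 1) with h | h
      · rw [h]
      · exact le_of_lt (Real.Gamma_strictMonoOn_Ici (by
          simp only [Set.mem_Ici]; push_cast
          have : (2:ℝ) ≤ (j:ℝ) := by exact_mod_cast (by omega : 2 ≤ j)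
          linarith) (Set.mem_Ici.mpr (by push_cast at hjge ⊢; linarith)) h)
    -- j! ≥ (N+1)^(j-N)
    have hfact : ((N:ℝ)+1) ^ (j - N : ℕ) ≤ (j.factorial : ℝ) := by
      have h1 : (N + (j - N)).factorial = j.factorial := by congr 1; omega
      have := Nat.factorial_mul_pow_le_factorial (m := N) (n := j - N)
      rw [h1] at this
      calc ((N:ℝ)+1) ^ (j - N : ℕ) = ((N+1 : ℕ) : ℝ) ^ (j - N : ℕ) := by push_cast; ring
        _ ≤ ((N.factorial * (N+1) ^ (j-N) : ℕ) : ℝ) := by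
            exact_mod_cast Nat.le_mul_of_pos_left _ (Nat.factorial_pos N)
        _ ≤ (j.factorial : ℝ) := by exact_mod_cast this
    -- (N+1)^(j-N) ≥ (N+1)^(βn-1-N) ≥ (N+1)^(-1-N) * (2(r+1))^n
    have hexp : ((N:ℝ)+1) ^ (β * n - 1 - N) ≤ ((N:ℝ)+1) ^ (j - N : ℕ) := by
      rw [← Real.rpow_natCast (((N:ℝ)+1)) (j - N)]
      apply Real.rpow_le_rpow_of_exponent_le hN1
      have : ((j - N : ℕ) : ℝ) = (j:ℝ) - N := by
        push_cast [Nat.cast_sub (by omega : N ≤ j)]; ring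
      rw [this]; linarith
    have hsplit : ((N:ℝ)+1) ^ (β * n - 1 - N)
        = (((N:ℝ)+1) ^ ((1:ℝ) + N))⁻¹ * (((N:ℝ)+1) ^ (β:ℝ)) ^ (n:ℕ) := by
      rw [← Real.rpow_natCast (((N:ℝ)+1) ^ (β:ℝ)) n, ← Real.rpow_mul (by linarith),
        ← Real.rpow_neg (by linarith), ← Real.rpow_add (by linarith)]
      ring_nf
    have hge : (((N:ℝ)+1) ^ ((1:ℝ) + N))⁻¹ * (2 * ((r:ℝ)+1)) ^ n
        ≤ Real.Gamma (β * n + 1) := by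
      refine le_trans ?_ (le_trans (le_trans hexp hfact) hmono)
      rw [hsplit]
      refine mul_le_mul_of_nonneg_left ?_ (by positivity)
      exact pow_le_pow_left₀ (by positivity) hNβ n
    have hΓpos : 0 < Real.Gamma (β * n + 1) := Real.Gamma_pos_of_pos (by positivity)
    rw [inv_mul_le_iff₀ hΓpos]
    have h1 : ((N:ℝ)+1) ^ (N+1:ℕ) = ((N:ℝ)+1) ^ ((1:ℝ)+(N:ℝ)) := by
      rw [← Real.rpow_natCast ((N:ℝ)+1) (N+1)]
      congr 1
      push_cast; ring
    calc (r:ℝ) ^ n ≤ ((r:ℝ)+1) ^ n := pow_le_pow_left₀ (by positivity) (by linarith) n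
      _ = (((N:ℝ)+1) ^ (N+1:ℕ) * (1/2:ℝ)^n) * ((((N:ℝ)+1) ^ ((1:ℝ)+(N:ℝ)))⁻¹ * (2*((r:ℝ)+1))^n) := by
          rw [h1, mul_mul_mul_comm, mul_inv_cancel₀ (by positivity), one_mul, ← mul_pow]
          congr 1
          ring
      _ ≤ (((N:ℝ)+1) ^ (N+1:ℕ) * (1/2:ℝ)^n) * Real.Gamma (β * n + 1) := by
          refine mul_le_mul_of_nonneg_left hge (by positivity)
      _ = Real.Gamma (β * n + 1) * (((N:ℝ)+1) ^ (N+1:ℕ) * (1/2:ℝ)^n) := by ring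
  -- conclude summability by eventual comparison with a geometric series
  apply Summable.of_norm_bounded_eventually
    (g := fun n : ℕ => ((N:ℝ)+1) ^ (N+1:ℕ) * (1/2:ℝ)^n)
    ((summable_geometric_of_lt_one (by norm_num) (by norm_num)).mul_left _)
  rw [Nat.cofinite_eq_atTop]
  filter_upwards [eventually_ge_atTop (Nat.ceil (((N:ℝ) + 2) / β))] with n hn
  have : ((N:ℝ) + 2)/β ≤ (n:ℝ) := le_trans (Nat.le_ceil _) (by exact_mod_cast hn)
  have hb := key n this
  have hpos : 0 ≤ (Real.Gamma (β * n + 1))⁻¹ * (r:ℝ)^n := by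
    have := Real.Gamma_pos_of_pos (show (0:ℝ) < β * n + 1 by positivity)
    positivity
  rwa [Real.norm_of_nonneg hpos]

noncomputable def mittagLeffler (β : ℝ) (z : ℂ) : ℂ :=
  ∑' n : ℕ, z ^ n / Complex.Gamma ((β * n + 1 : ℝ) : ℂ)

noncomputable def mlCoeff (β : ℝ) (n : ℕ) : ℂ := (Complex.Gamma ((β * n + 1 : ℝ) : ℂ))⁻¹

lemma mlCoeff_eq (β : ℝ) (n : ℕ) : mlCoeff β n = ((Real.Gamma (β * n + 1) : ℝ) : ℂ)⁻¹ := by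
  rw [mlCoeff, Complex.Gamma_ofReal]

lemma ml_radius (β : ℝ) (hβ : 0 < β) : (ofScalars ℂ (mlCoeff β)).radius = ⊤ := by
  apply FormalMultilinearSeries.radius_eq_top_of_summable_norm
  intro r
  have : Summable (fun n : ℕ => (Real.Gamma (β * n + 1))⁻¹ * (r : ℝ) ^ n) := gamma_summable β hβ r
  refine this.congr fun n => ?_
  rw [ofScalars_norm, mlCoeff_eq]
  have hpos : 0 < Real.Gamma (β * n + 1) := Real.Gamma_pos_of_pos (by positivity)
  rw [norm_inv, Complex.norm_real, Real.norm_of_nonneg hpos.le]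

lemma ml_hasFPowerSeries (β : ℝ) (hβ : 0 < β) :
    HasFPowerSeriesOnBall (mittagLeffler β) (ofScalars ℂ (mlCoeff β)) 0 ⊤ := by
  have h := (ofScalars ℂ (mlCoeff β)).hasFPowerSeriesOnBall (by rw [ml_radius β hβ]; exact ENNReal.zero_lt_top)
  rw [ml_radius β hβ] at h
  convert h using 1
  funext z
  show mittagLeffler β z = (ofScalars ℂ (mlCoeff β)).sum z
  rw [show (ofScalars ℂ (mlCoeff β)).sum = ofScalarsSum (mlCoeff β) from rfl, ofScalars_sum_eq]
  refine tsum_congr fun n => ?_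
  rw [mlCoeff, smul_eq_mul, div_eq_mul_inv, mul_comm]

lemma ml_differentiable (β : ℝ) (hβ : 0 < β) : Differentiable ℂ (mittagLeffler β) := by
  intro z
  exact ((ml_hasFPowerSeries β hβ).analyticAt_of_mem (y := z) (by simp)).differentiableAt

lemma ml_zero (β : ℝ) (hβ : 0 < β) : mittagLeffler β 0 = 1 := by
  have h := (ml_hasFPowerSeries β hβ).coeff_zero (fun _ => 1)
  rw [← h, ofScalars_apply_eq]
  simp [mlCoeff, Complex.Gamma_one]

lemma cauchy_coeff_bound {f : ℂ → ℂ} {R M : ℝ} (hR : 0 < R)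
    (hf : ContinuousOn f (sphere (0:ℂ) R)) (hb : ∀ z ∈ sphere (0:ℂ) R, ‖f z‖ ≤ M) (n : ℕ) :
    ‖(cauchyPowerSeries f 0 R).coeff n‖ ≤ M / R ^ n := by
  have hM : 0 ≤ M := le_trans (norm_nonneg (f (R:ℂ)))
    (hb (R:ℂ) (by simp [Complex.dist_eq, Complex.norm_real, Real.norm_eq_abs, abs_of_pos hR]))
  have hcont : Continuous fun θ : ℝ => ‖f (circleMap 0 R θ)‖ := by
    refine Continuous.norm ?_
    exact hf.comp_continuous (continuous_circleMap 0 R) fun θ => circleMap_mem_sphere 0 hR.le θ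
  have hint : (∫ θ : ℝ in (0)..2 * π, ‖f (circleMap 0 R θ)‖) ≤ M * (2 * π) := by
    calc (∫ θ : ℝ in (0)..2 * π, ‖f (circleMap 0 R θ)‖)
        ≤ ∫ _ : ℝ in (0)..2 * π, M := by
          apply intervalIntegral.integral_mono_on Real.two_pi_pos.le
            (hcont.intervalIntegrable _ _) intervalIntegrable_const
          intro θ _
          exact hb _ (circleMap_mem_sphere 0 hR.le θ)
      _ = M * (2 * π) := by rw [intervalIntegral.integral_const]; simp [smul_eq_mul]; ring
  have h1 : ‖(cauchyPowerSeries f 0 R).coeff n‖ ≤ ‖cauchyPowerSeries f 0 R n‖ := by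
    rw [FormalMultilinearSeries.coeff]
    calc ‖cauchyPowerSeries f 0 R n fun _ => 1‖
        ≤ ‖cauchyPowerSeries f 0 R n‖ * ∏ _i : Fin n, ‖(1:ℂ)‖ :=
          (cauchyPowerSeries f 0 R n).le_opNorm _
      _ = ‖cauchyPowerSeries f 0 R n‖ := by simp
  refine h1.trans ((norm_cauchyPowerSeries_le f 0 R n).trans ?_)
  rw [abs_of_pos hR]
  calc (2 * π)⁻¹ * (∫ θ : ℝ in (0)..2 * π, ‖f (circleMap 0 R θ)‖) * R⁻¹ ^ n
      ≤ (2 * π)⁻¹ * (M * (2 * π)) * R⁻¹ ^ n := by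
        gcongr
    _ = M / R ^ n := by
        field_simp
        rw [one_div_pow, mul_assoc, one_div_mul_cancel (pow_ne_zero _ hR.ne'), mul_one]

lemma ofScalars_coeff (c : ℕ → ℂ) (n : ℕ) : (ofScalars ℂ c).coeff n = c n := by
  rw [FormalMultilinearSeries.coeff]
  have := ofScalars_apply_eq (E := ℂ) c 1 n
  simpa using this

/-- Zero-mean property of the generalized Charlier kernels: for `n ≥ 1`,
`∑ₖ Cₙ^{λ,β}(k) π_{λ,β}({k}) = 0`, while for `n = 0` the sum is `1`. -/
theorem charlier_kernels_zero_mean (β lam : ℝ) (hβ : 0 < β) (hβ1 : β ≤ 1) (hlam : 0 < lam)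
    (C : ℕ → ℕ → ℂ)
    (hC : ∀ k : ℕ, ∃ ε > (0 : ℝ), ∀ u : ℂ, ‖u‖ < ε →
      HasSum (fun n : ℕ => u ^ n / ((n).factorial : ℂ) * C n k)
        ((1 + u) ^ k / mittagLeffler β ((lam : ℂ) * u))) :
    (∀ n : ℕ, 1 ≤ n →
      ∑' k : ℕ, C n k *
          ((lam : ℂ) ^ k / ((k).factorial : ℂ) * iteratedDeriv k (mittagLeffler β) (-(lam : ℂ))) = 0) ∧
    ∑' k : ℕ, C 0 k *
        ((lam : ℂ) ^ k / ((k).factorial : ℂ) * iteratedDeriv k (mittagLeffler β) (-(lam : ℂ))) = 1 := by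
  set f := mittagLeffler β with hfdef
  have hf : Differentiable ℂ f := ml_differentiable β hβ
  set T : ℕ → ℂ := fun k =>
    (lam : ℂ) ^ k / (k.factorial : ℂ) * iteratedDeriv k f (-(lam : ℂ)) with hTdef
  -- Taylor expansion of the entire function f around -lam
  have taylor : ∀ w : ℂ, HasSum (fun k => T k * w ^ k) (f ((lam : ℂ) * w - lam)) := by
    intro w
    have h := Complex.hasSum_taylorSeries_of_entire hf (-(lam : ℂ)) ((lam : ℂ) * w - lam)
    have he : (fun k => T k * w ^ k) = fun k => (k.factorial : ℂ)⁻¹ •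
        (((lam : ℂ) * w - lam) - (-(lam : ℂ))) ^ k • iteratedDeriv k f (-(lam : ℂ)) := by
      funext k
      have : ((lam : ℂ) * w - lam) - (-(lam : ℂ)) = (lam : ℂ) * w := by ring
      rw [this, smul_eq_mul, smul_eq_mul, hTdef, mul_pow]
      field_simp
    rw [he]
    exact h
  -- choose a radius on which the denominator stays near 1
  have hcont : ContinuousAt (fun u : ℂ => f ((lam : ℂ) * u)) 0 :=
    (hf.continuous.comp (continuous_const.mul continuous_id)).continuousAt
  obtain ⟨r₁, hr₁pos, hr₁⟩ := Metric.continuousAt_iff.mp hcont (1/2) (by norm_num)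
  set r : ℝ := r₁ / 2 with hrdef
  have hr : 0 < r := by positivity
  have hlow : ∀ u : ℂ, ‖u‖ ≤ r → (1/2 : ℝ) ≤ ‖f ((lam : ℂ) * u)‖ := by
    intro u hu
    have h1 : dist u 0 < r₁ := by
      rw [dist_zero_right]; linarith
    have h2 := hr₁ h1
    rw [dist_eq_norm] at h2
    have h3 : f ((lam : ℂ) * 0) = 1 := by rw [mul_zero]; exact ml_zero β hβ
    rw [h3] at h2
    have h5 : ‖(1:ℂ)‖ = 1 := by simp
    have h6 : ‖(1:ℂ)‖ - ‖f ((lam : ℂ) * u)‖ ≤ ‖(1:ℂ) - f ((lam : ℂ) * u)‖ :=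
      norm_sub_norm_le _ _
    rw [norm_sub_rev] at h6
    linarith
  have hne : ∀ u : ℂ, ‖u‖ ≤ r → f ((lam : ℂ) * u) ≠ 0 := by
    intro u hu h0
    have := hlow u hu
    rw [h0] at this; simp at this; linarith
  -- the functions g k and their power series
  set g : ℕ → ℂ → ℂ := fun k u => (1 + u) ^ k / f ((lam : ℂ) * u) with hgdef
  have hgd : ∀ k, DifferentiableOn ℂ (g k) (closedBall (0:ℂ) r) := by
    intro k
    apply DifferentiableOn.div
    · exact (Differentiable.pow (by fun_prop) k).differentiableOn
    · exact ((hf.comp (by fun_prop)).differentiableOn)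
    · intro u hu
      exact hne u (mem_closedBall_zero_iff.mp hu)
  have hball : ∀ k, HasFPowerSeriesOnBall (g k) (cauchyPowerSeries (g k) 0 r) 0
      (ENNReal.ofReal r) := by
    intro k
    have h1 : DifferentiableOn ℂ (g k) (closedBall (0:ℂ) (r.toNNReal : ℝ)) := by
      have he : ((r.toNNReal : ℝ)) = r := Real.coe_toNNReal r hr.le
      rw [he]
      exact hgd k
    have := DifferentiableOn.hasFPowerSeriesOnBall (R := r.toNNReal) h1 (by simpa using hr)
    rw [Real.coe_toNNReal r hr.le] at this
    rwa [ENNReal.ofReal]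
  -- identify coefficients with C n k / n!
  have hqc : ∀ k n, (cauchyPowerSeries (g k) 0 r).coeff n = C n k / (n.factorial : ℂ) := by
    intro k n
    obtain ⟨ε, hε, hsum⟩ := hC k
    have h1 : HasFPowerSeriesAt (g k) (ofScalars ℂ (fun m => C m k / (m.factorial : ℂ))) 0 := by
      rw [hasFPowerSeriesAt_iff]
      filter_upwards [Metric.ball_mem_nhds 0 hε] with z hz
      have hz' := hsum z (mem_ball_zero_iff.mp hz)
      have : (fun m => z ^ m • (ofScalars ℂ (fun m => C m k / (m.factorial : ℂ))).coeff m)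
          = fun m => z ^ m / (m.factorial : ℂ) * C m k := by
        funext m
        rw [ofScalars_coeff, smul_eq_mul]
        field_simp
      rw [this, zero_add]
      exact hz'
    have h2 : HasFPowerSeriesAt (g k) (cauchyPowerSeries (g k) 0 r) 0 :=
      (hball k).hasFPowerSeriesAt
    have h3 := h1.eq_formalMultilinearSeries h2
    rw [← h3, ofScalars_coeff]
  -- bound on the coefficients
  have hCb : ∀ n k, ‖C n k‖ ≤ (n.factorial : ℝ) * (2 * (1+r)^k) / r ^ n := by
    intro n k
    have hsb : ∀ z ∈ sphere (0:ℂ) r, ‖g k z‖ ≤ 2 * (1+r)^k := by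
      intro z hz
      have hz' : ‖z‖ = r := by rwa [mem_sphere_iff_norm, sub_zero] at hz
      rw [hgdef]
      rw [norm_div, norm_pow]
      have h1 : ‖(1:ℂ) + z‖ ≤ 1 + r := by
        calc ‖(1:ℂ) + z‖ ≤ ‖(1:ℂ)‖ + ‖z‖ := norm_add_le _ _
          _ = 1 + r := by rw [hz']; simp
      have h2 := hlow z (le_of_eq hz')
      calc ‖1 + z‖ ^ k / ‖f ((lam:ℂ) * z)‖ ≤ (1+r)^k / (1/2 : ℝ) := by
            apply div_le_div₀ (by positivity) (pow_le_pow_left₀ (norm_nonneg _) h1 k) (by norm_num) h2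
        _ = 2 * (1+r)^k := by ring
    have hcs : ContinuousOn (g k) (sphere (0:ℂ) r) :=
      (hgd k).continuousOn.mono sphere_subset_closedBall
    have := cauchy_coeff_bound hr hcs hsb n
    rw [hqc k n] at this
    have h4 : ‖C n k / (n.factorial : ℂ)‖ = ‖C n k‖ / (n.factorial : ℝ) := by
      rw [norm_div]; congr 1; simp
    have h5 : ‖C n k‖ = (n.factorial:ℝ) * ‖C n k / (n.factorial:ℂ)‖ := by
      rw [norm_div, Complex.norm_natCast]
      field_simp
    rw [h5, mul_div_assoc]
    exact mul_le_mul_of_nonneg_left this (by positivity)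
  -- membership helper
  have hmem : ∀ v : ℂ, ‖v‖ ≤ r/2 → v ∈ Metric.eball (0:ℂ) (ENNReal.ofReal r) := by
    intro v hv
    rw [ENNReal.ofReal, Metric.eball_coe, mem_ball_zero_iff, Real.coe_toNNReal r hr.le]
    linarith
  -- bound on the Taylor coefficients of f at -lam
  obtain ⟨M₁, hM₁⟩ : ∃ M₁ : ℝ, ∀ k, ‖T k‖ * (2 * (1+r))^k ≤ M₁ := by
    have hTsum := taylor (((2 * (1+r) : ℝ)) : ℂ)
    have h0 : Tendsto (fun k => ‖T k * (((2*(1+r):ℝ)):ℂ)^k‖) atTop (𝓝 0) := by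
      have h1 := hTsum.summable.tendsto_atTop_zero
      simpa using h1.norm
    obtain ⟨M₁, hM₁⟩ := h0.isBoundedUnder_le.bddAbove_range
    refine ⟨M₁, fun k => ?_⟩
    have h2 := hM₁ (Set.mem_range_self (f := fun k => ‖T k * (((2*(1+r):ℝ)):ℂ)^k‖) k)
    rw [norm_mul, norm_pow, Complex.norm_real, Real.norm_of_nonneg (by positivity)] at h2
    exact h2
  have hM₁0 : 0 ≤ M₁ := le_trans (by positivity) (hM₁ 0)
  have hTb : ∀ k, ‖T k‖ * (1+r)^k ≤ M₁ / 2^k := by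
    intro k
    rw [le_div_iff₀ (by positivity)]
    calc ‖T k‖ * (1+r)^k * 2^k = ‖T k‖ * (2 * (1+r))^k := by rw [mul_pow]; ring
      _ ≤ M₁ := hM₁ k
  -- the numbers S n
  set S : ℕ → ℂ := fun n => ∑' k, T k * C n k with hSdef
  -- key identity: the power series with coefficients S n / n! sums to 1 near 0
  have key : ∀ v : ℂ, ‖v‖ ≤ r/2 → HasSum (fun n => v^n / (n.factorial : ℂ) * S n) 1 := by
    intro v hv
    set A : ℕ × ℕ → ℂ := fun p => T p.2 * (v^p.1 / (p.1.factorial : ℂ) * C p.1 p.2) with hAdef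
    have hbnd : ∀ p : ℕ × ℕ, ‖A p‖ ≤ (1/2:ℝ)^p.1 * (2*M₁*(1/2:ℝ)^p.2) := by
      rintro ⟨n, k⟩
      have h1 : ‖A (n, k)‖ = ‖T k‖ * (‖v‖^n / (n.factorial:ℝ) * ‖C n k‖) := by
        rw [hAdef]
        simp [norm_mul, norm_div, norm_pow, Complex.norm_natCast]
      have e1 : ‖v‖^n / (n.factorial:ℝ) * ‖C n k‖
          ≤ (r/2)^n/(n.factorial:ℝ) * ((n.factorial:ℝ)*(2*(1+r)^k)/r^n) := by
        apply mul_le_mul _ (hCb n k) (norm_nonneg _) (by positivity)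
        gcongr
      have e2 : (r/2)^n/(n.factorial:ℝ) * ((n.factorial:ℝ)*(2*(1+r)^k)/r^n)
          = (1+r)^k * (2*(1/2:ℝ)^n) := by
        rw [div_pow]
        field_simp
        ring
        rw [← mul_pow]; norm_num
      calc ‖A (n, k)‖ = ‖T k‖ * (‖v‖^n / (n.factorial:ℝ) * ‖C n k‖) := h1
        _ ≤ ‖T k‖ * ((1+r)^k * (2*(1/2:ℝ)^n)) := by
            rw [← e2]
            exact mul_le_mul_of_nonneg_left e1 (norm_nonneg _)
        _ = (‖T k‖ * (1+r)^k) * (2*(1/2:ℝ)^n) := by ring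
        _ ≤ (M₁ / 2^k) * (2*(1/2:ℝ)^n) := by
            apply mul_le_mul_of_nonneg_right (hTb k) (by positivity)
        _ = (1/2:ℝ)^n * (2*M₁*(1/2:ℝ)^k) := by
            rw [div_pow, one_pow]
            field_simp
            ring
            rw [mul_assoc, ← mul_pow]; norm_num
    have hsumB : Summable (fun p : ℕ×ℕ => (1/2:ℝ)^p.1 * (2*M₁*(1/2:ℝ)^p.2)) :=
      Summable.mul_of_nonneg (summable_geometric_of_lt_one (by norm_num) (by norm_num))
        ((summable_geometric_of_lt_one (by norm_num) (by norm_num)).mul_left (2*M₁))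
        (fun n => by positivity) (fun k => by positivity)
    have hA : Summable A :=
      Summable.of_norm (Summable.of_nonneg_of_le (fun p => norm_nonneg _) hbnd hsumB)
    have hrow : ∀ k, HasSum (fun n => A (n, k)) (T k * g k v) := by
      intro k
      have h1 := (hball k).hasSum (hmem v hv)
      rw [zero_add] at h1
      have h2 := h1.mul_left (T k)
      have he : (fun n => T k * ((cauchyPowerSeries (g k) 0 r) n fun _ => v))
          = fun n => A (n, k) := by
        funext n
        rw [FormalMultilinearSeries.apply_eq_pow_smul_coeff, hqc k n, hAdef]
        simp only [smul_eq_mul]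
        ring
      rwa [he] at h2
    have hrowt : ∀ n, ∑' k, A (n, k) = v^n/(n.factorial:ℂ) * S n := by
      intro n
      calc ∑' k, A (n, k) = ∑' k, (v^n/(n.factorial:ℂ)) * (T k * C n k) :=
            tsum_congr fun k => by rw [hAdef]; ring
        _ = v^n/(n.factorial:ℂ) * S n := by rw [tsum_mul_left, hSdef]
    have hTS : HasSum (fun k => T k * g k v) 1 := by
      have h2 := taylor (1 + v)
      have e : (lam:ℂ) * (1+v) - lam = lam * v := by ring
      rw [e] at h2
      have h3 := h2.div_const (f ((lam:ℂ)*v))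
      have e2 : (fun k => T k * (1+v)^k / f ((lam:ℂ)*v)) = fun k => T k * g k v := by
        funext k
        rw [hgdef]
        simp only [mul_div_assoc]
      rw [e2, div_self (hne v (by linarith))] at h3
      exact h3
    have hsummN : Summable (fun n => v^n/(n.factorial:ℂ) * S n) := by
      have h4 := hA.prod
      exact h4.congr fun n => hrowt n
    have htv : ∑' n, v^n/(n.factorial:ℂ) * S n = 1 := by
      have huncur : Summable (Function.uncurry fun n k => A (n, k)) := hA.congr fun p => rfl
      calc ∑' n, v^n/(n.factorial:ℂ) * S n = ∑' (n) (k), A (n, k) :=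
            tsum_congr fun n => (hrowt n).symm
        _ = ∑' (k) (n), A (n, k) := (Summable.tsum_comm huncur).symm
        _ = ∑' k, T k * g k v := tsum_congr fun k => (hrow k).tsum_eq
        _ = 1 := hTS.tsum_eq
    exact (Summable.hasSum_iff hsummN).mpr htv
  -- identify the power series of the constant function 1
  have hSps : HasFPowerSeriesAt (fun _ : ℂ => (1:ℂ))
      (ofScalars ℂ (fun n => S n / (n.factorial : ℂ))) 0 := by
    rw [hasFPowerSeriesAt_iff]
    filter_upwards [Metric.ball_mem_nhds (0:ℂ) (show (0:ℝ) < r/2 by positivity)] with z hz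
    have hk := key z (le_of_lt (mem_ball_zero_iff.mp hz))
    have he : (fun n => z ^ n • (ofScalars ℂ (fun n => S n / (n.factorial : ℂ))).coeff n)
        = fun n => z^n / (n.factorial : ℂ) * S n := by
      funext n
      rw [ofScalars_coeff, smul_eq_mul]
      field_simp
    rw [he]
    exact hk
  have hconst : HasFPowerSeriesAt (fun _ : ℂ => (1:ℂ))
      (constFormalMultilinearSeries ℂ ℂ (1:ℂ)) 0 := hasFPowerSeriesAt_const
  have heq := hSps.eq_formalMultilinearSeries hconst
  have hcoeff : ∀ n, S n / (n.factorial:ℂ) = (constFormalMultilinearSeries ℂ ℂ (1:ℂ)).coeff n := by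
    intro n
    rw [← ofScalars_coeff (fun n => S n / (n.factorial : ℂ)) n, heq]
  constructor
  · intro n hn
    have h1 : (constFormalMultilinearSeries ℂ ℂ (1:ℂ)).coeff n = 0 := by
      rw [FormalMultilinearSeries.coeff, constFormalMultilinearSeries_apply_of_nonzero (by omega)]
      simp
    have h2 := hcoeff n
    rw [h1, div_eq_zero_iff] at h2
    have h3 : S n = 0 := by
      rcases h2 with h | h
      · exact h
      · exact absurd h (by exact_mod_cast Nat.factorial_ne_zero n)
    calc ∑' k, C n k * T k = ∑' k, T k * C n k := tsum_congr fun k => mul_comm _ _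
      _ = S n := by rw [hSdef]
      _ = 0 := h3
  · have h1 : (constFormalMultilinearSeries ℂ ℂ (1:ℂ)).coeff 0 = 1 := by
      simp [FormalMultilinearSeries.coeff, constFormalMultilinearSeries]
    have h2 := hcoeff 0
    rw [h1] at h2
    have h3 : S 0 = 1 := by
      simpa using h2
    calc ∑' k, C 0 k * T k = ∑' k, T k * C 0 k := tsum_congr fun k => mul_comm _ _
      _ = S 0 := by rw [hSdef]
      _ = 1 := h3
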